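/- For every p ∈ (1,∞) one has π_p^p > 2, where π_p := 2π(p−1)^{1/p}/(p·sin(π/p)); moreover lim_{p→1⁺} π_p^p = 2 and lim_{p→+∞} π_p^p = +∞. -/

import Mathlib

open Filter Topology

/-- `π_p := 2π (p-1)^{1/p} / (p sin(π/p))`. -/
noncomputable def piP (p : ℝ) : ℝ :=
  2 * Real.pi * (p - 1) ^ (1 / p) / (p * Real.sin (Real.pi / p))

section Aux
open Real

lemma key (p : ℝ) (hp : 1 < p) :
    piP p ^ p = 2 ^ p * (p - 1) ^ (1 - p) *
      ((Real.pi * (p - 1) / p) / Real.sin (Real.pi * (p - 1) / p)) ^ p := by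
  have hp0 : (0:ℝ) < p := by linarith
  have hp1 : (0:ℝ) < p - 1 := by linarith
  set u : ℝ := Real.pi * (p - 1) / p with hu
  have hu0 : 0 < u := by positivity
  have hupi : u < Real.pi := by
    rw [hu, div_lt_iff₀ hp0]
    nlinarith [Real.pi_pos]
  have hsinu : 0 < Real.sin u := Real.sin_pos_of_pos_of_lt_pi hu0 hupi
  have hs : Real.sin (Real.pi / p) = Real.sin u := by
    have hh : Real.pi / p = Real.pi - u := by
      rw [hu]; field_simp; ring
    rw [hh, Real.sin_pi_sub]
  unfold piP
  rw [hs]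
  rw [Real.div_rpow (by positivity) (by positivity)]
  rw [Real.mul_rpow (by positivity) (by positivity),
      Real.mul_rpow (by positivity) (by positivity),
      Real.mul_rpow (by positivity) (by positivity)]
  rw [← Real.rpow_mul hp1.le, one_div, inv_mul_cancel₀ hp0.ne', Real.rpow_one]
  rw [Real.div_rpow hu0.le hsinu.le]
  have huP : u ^ p = Real.pi ^ p * (p-1) ^ p / p ^ p := by
    rw [hu, Real.div_rpow (by positivity) hp0.le, Real.mul_rpow Real.pi_pos.le hp1.le]
  rw [huP]
  have h2 : (p-1) ^ (1-p) * (p-1) ^ p = p - 1 := by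
    rw [← Real.rpow_add hp1]; norm_num
  have hsp : (0:ℝ) < Real.sin u ^ p := Real.rpow_pos_of_pos hsinu p
  have hpp : (0:ℝ) < p ^ p := Real.rpow_pos_of_pos hp0 p
  field_simp
  linear_combination (-1:ℝ) * h2

lemma lb (p : ℝ) (hp : 1 < p) :
    2 ^ p * (p - 1) ^ (1 - p) < piP p ^ p ∧ 2 ^ p * (p - 1) < piP p ^ p := by
  have hp0 : (0:ℝ) < p := by linarith
  have hp1 : (0:ℝ) < p - 1 := by linarith
  set u : ℝ := Real.pi * (p - 1) / p with hu
  have hu0 : 0 < u := by positivity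
  have hupi : u < Real.pi := by
    rw [hu, div_lt_iff₀ hp0]; nlinarith [Real.pi_pos]
  have hsinu : 0 < Real.sin u := Real.sin_pos_of_pos_of_lt_pi hu0 hupi
  have hpos : (0:ℝ) < 2 ^ p * (p - 1) ^ (1 - p) :=
    mul_pos (Real.rpow_pos_of_pos two_pos p) (Real.rpow_pos_of_pos hp1 _)
  rw [key p hp]
  constructor
  · have h1 : 1 < u / Real.sin u := by
      rw [lt_div_iff₀ hsinu, one_mul]; exact Real.sin_lt hu0
    have : (1:ℝ) < (u / Real.sin u) ^ p := by
      calc (1:ℝ) = 1 ^ p := (Real.one_rpow p).symm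
      _ < (u / Real.sin u) ^ p := Real.rpow_lt_rpow one_pos.le h1 hp0
    nlinarith
  · have h1 : p - 1 < u / Real.sin u := by
      rw [lt_div_iff₀ hsinu]
      have hsin : Real.sin u < Real.pi - u := by
        calc Real.sin u = Real.sin (Real.pi - u) := (Real.sin_pi_sub u).symm
        _ < Real.pi - u := Real.sin_lt (by linarith)
      have hπu : Real.pi - u = Real.pi / p := by rw [hu]; field_simp; ring
      rw [hπu] at hsin
      calc (p-1) * Real.sin u < (p-1) * (Real.pi / p) := by
            exact mul_lt_mul_of_pos_left hsin hp1
      _ = u := by rw [hu]; ring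
    have h2 : (p-1) ^ p < (u / Real.sin u) ^ p := Real.rpow_lt_rpow hp1.le h1 hp0
    have h3 : (p-1) ^ (1-p) * (p-1) ^ p = p - 1 := by
      rw [← Real.rpow_add hp1]; norm_num
    calc 2 ^ p * (p - 1) = 2 ^ p * ((p-1) ^ (1-p) * (p-1) ^ p) := by rw [h3]
    _ < 2 ^ p * ((p - 1) ^ (1 - p) * (u / Real.sin u) ^ p) := by
        apply mul_lt_mul_of_pos_left _ (Real.rpow_pos_of_pos two_pos p)
        exact mul_lt_mul_of_pos_left h2 (Real.rpow_pos_of_pos hp1 _)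
    _ = 2 ^ p * (p - 1) ^ (1 - p) * (u / Real.sin u) ^ p := by ring

lemma part1 (p : ℝ) (hp : 1 < p) : 2 < piP p ^ p := by
  have hp1 : (0:ℝ) < p - 1 := by linarith
  rcases le_or_gt p 2 with h2 | h2
  · refine lt_trans ?_ (lb p hp).1
    have hA : (0:ℝ) < (p-1) ^ (p-1) := Real.rpow_pos_of_pos hp1 _
    have hle : (p-1) ^ (p-1) < 2 ^ (p-1) :=
      Real.rpow_lt_rpow hp1.le (by linarith) (by linarith)
    have h1p : (p-1:ℝ) ^ (1-p) = ((p-1) ^ (p-1))⁻¹ := by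
      rw [← Real.rpow_neg hp1.le]; norm_num
    have h2p : (2:ℝ) ^ p = 2 * 2 ^ (p-1) := by
      rw [show p = 1 + (p-1) by ring, Real.rpow_add two_pos, Real.rpow_one]
      ring_nf
    rw [h1p, h2p]
    rw [lt_mul_inv_iff₀ hA]
    nlinarith
  · refine lt_trans ?_ (lb p hp).2
    have h4 : (2:ℝ) ^ (2:ℝ) ≤ 2 ^ p :=
      Real.rpow_le_rpow_left_iff (by norm_num : (1:ℝ) < 2) |>.mpr h2.le
    have : (2:ℝ) ^ (2:ℝ) = 4 := by
      rw [show (2:ℝ) = ((2:ℕ):ℝ) by norm_num, Real.rpow_natCast]; norm_num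
    nlinarith [Real.rpow_pos_of_pos (show (0:ℝ)<2 by norm_num) p]

lemma part3 : Tendsto (fun p : ℝ => piP p ^ p) atTop atTop := by
  apply tendsto_atTop_mono' atTop
    (h := show (fun p : ℝ => p - 1) ≤ᶠ[atTop] fun p : ℝ => piP p ^ p by
      filter_upwards [eventually_gt_atTop (1:ℝ)] with p hp
      have h1 : (1:ℝ) ≤ 2 ^ p := Real.one_le_rpow (by norm_num) (by linarith)
      have := (lb p hp).2
      nlinarith)
  exact tendsto_atTop_add_const_right atTop (-1) tendsto_id

lemma part2 : Tendsto (fun p : ℝ => piP p ^ p) (𝓝[>] (1:ℝ)) (𝓝 2) := by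
  have hsub : Tendsto (fun p : ℝ => p - 1) (𝓝[>] (1:ℝ)) (𝓝[>] (0:ℝ)) := by
    apply tendsto_nhdsWithin_of_tendsto_nhds_of_eventually_within
    · have : Tendsto (fun p : ℝ => p - 1) (𝓝 (1:ℝ)) (𝓝 0) := by
        simpa using (continuous_sub_right (1:ℝ)).tendsto 1
      exact this.mono_left nhdsWithin_le_nhds
    · filter_upwards [self_mem_nhdsWithin] with p hp
      simpa [Set.mem_Ioi] using hp
  have t1 : Tendsto (fun p : ℝ => (2:ℝ) ^ p) (𝓝[>] (1:ℝ)) (𝓝 2) := by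
    have := (@Real.continuousAt_const_rpow 2 1 (by norm_num)).tendsto
    rw [Real.rpow_one] at this
    exact this.mono_left nhdsWithin_le_nhds
  have t2 : Tendsto (fun p : ℝ => (p - 1) ^ (1 - p)) (𝓝[>] (1:ℝ)) (𝓝 1) := by
    have hlog : Tendsto (fun x : ℝ => Real.log x * x) (𝓝[>] (0:ℝ)) (𝓝 0) := by
      have := tendsto_log_mul_rpow_nhdsGT_zero one_pos
      simpa [Real.rpow_one] using this
    have hexp : Tendsto (fun x : ℝ => Real.exp (-(Real.log x * x))) (𝓝[>] (0:ℝ)) (𝓝 1) := by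
      have hneg : Tendsto (fun x : ℝ => -(Real.log x * x)) (𝓝[>] (0:ℝ)) (𝓝 0) := by
        simpa using hlog.neg
      have := (Real.continuous_exp.tendsto 0).comp hneg
      simpa [Function.comp_def] using this
    have := hexp.comp hsub
    apply this.congr'
    filter_upwards [self_mem_nhdsWithin] with p hp
    have hp1 : (0:ℝ) < p - 1 := by simpa [Set.mem_Ioi] using hp
    simp only [Function.comp_apply]
    rw [Real.rpow_def_of_pos hp1]
    ring_nf
  have t3 : Tendsto (fun p : ℝ =>
      ((Real.pi * (p - 1) / p) / Real.sin (Real.pi * (p - 1) / p)) ^ p)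
      (𝓝[>] (1:ℝ)) (𝓝 1) := by
    have hU : Tendsto (fun p : ℝ => Real.pi * (p - 1) / p) (𝓝[>] (1:ℝ)) (𝓝[>] (0:ℝ)) := by
      apply tendsto_nhdsWithin_of_tendsto_nhds_of_eventually_within
      · have hc : ContinuousAt (fun p : ℝ => Real.pi * (p - 1) / p) 1 := by
          apply ContinuousAt.div
          · fun_prop
          · fun_prop
          · norm_num
        have := hc.tendsto
        simpa using this.mono_left nhdsWithin_le_nhds
      · filter_upwards [self_mem_nhdsWithin] with p hp
        have hp1 : (1:ℝ) < p := by simpa using hp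
        have : 0 < Real.pi * (p - 1) / p :=
          div_pos (mul_pos Real.pi_pos (by linarith)) (by linarith)
        simpa [Set.mem_Ioi] using this
    have hslope : Tendsto (fun x : ℝ => Real.sin x / x) (𝓝[≠] (0:ℝ)) (𝓝 1) := by
      have h := (Real.hasDerivAt_sin 0)
      rw [hasDerivAt_iff_tendsto_slope] at h
      have h2 : ∀ x : ℝ, slope Real.sin 0 x = Real.sin x / x := by
        intro x; simp [slope_def_field, div_eq_mul_inv]
      simpa [Real.cos_zero] using h.congr h2
    have hq : Tendsto (fun x : ℝ => x / Real.sin x) (𝓝[>] (0:ℝ)) (𝓝 1) := by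
      have h := (hslope.mono_left (nhdsWithin_mono (s := Set.Ioi (0:ℝ)) _ (by
        intro x hx; simp only [Set.mem_compl_iff, Set.mem_singleton_iff]
        exact ne_of_gt hx))).inv₀ (by norm_num)
      simpa [inv_div] using h
    have hbase : Tendsto (fun p : ℝ =>
        (Real.pi * (p - 1) / p) / Real.sin (Real.pi * (p - 1) / p)) (𝓝[>] (1:ℝ)) (𝓝 1) :=
      hq.comp hU
    have hexp1 : Tendsto (fun p : ℝ => p) (𝓝[>] (1:ℝ)) (𝓝 1) :=
      tendsto_id.mono_left nhdsWithin_le_nhds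
    have := hbase.rpow hexp1 (Or.inl one_ne_zero)
    simpa using this
  have hmul := (t1.mul t2).mul t3
  have : (2:ℝ) * 1 * 1 = 2 := by norm_num
  rw [this] at hmul
  apply hmul.congr'
  filter_upwards [self_mem_nhdsWithin] with p hp
  exact (key p (by simpa using hp)).symm

end Aux

/-- `π_p^p > 2` for every `p ∈ (1,∞)`, `π_p^p → 2` as `p → 1⁺`, and
`π_p^p → +∞` as `p → +∞`. -/
theorem stmt17 :
    (∀ p : ℝ, 1 < p → 2 < piP p ^ p) ∧
    Tendsto (fun p : ℝ => piP p ^ p) (𝓝[>] (1 : ℝ)) (𝓝 2) ∧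
    Tendsto (fun p : ℝ => piP p ^ p) atTop atTop :=
  ⟨part1, part2, part3⟩
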